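/- Let μ be a σ-finite measure on a measurable sample space X, and let f₀, f₁ be probability densities with respect to μ (nonnegative, integrating to 1). Fix λ₀ > 0 and let R = {x : f₁ x ≥ λ₀ * f₀ x}. Then for any measurable set S with ∫_S f₀ dμ ≤ ∫_R f₀ dμ, we have ∫_S f₁ dμ ≤ ∫_R f₁ dμ. (Neyman–Pearson lemma: the likelihood-ratio region maximizes power among tests of no larger size.) -/

import Mathlib

open MeasureTheory ENNReal NNReal

/-- Neyman–Pearson lemma: the likelihood-ratio region maximizes power
among tests of no larger size. -/
theorem neyman_pearson
    {X : Type*} [MeasurableSpace X] (μ : Measure X) [SigmaFinite μ]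
    (f₀ f₁ : X → ℝ≥0∞) (hf₀ : Measurable f₀) (hf₁ : Measurable f₁)
    (hf₀1 : ∫⁻ x, f₀ x ∂μ = 1) (hf₁1 : ∫⁻ x, f₁ x ∂μ = 1)
    (lam₀ : ℝ≥0) (hlam : 0 < lam₀)
    (R : Set X) (hR : R = {x | (lam₀ : ℝ≥0∞) * f₀ x ≤ f₁ x})
    (S : Set X) (hS : MeasurableSet S)
    (hsize : ∫⁻ x in S, f₀ x ∂μ ≤ ∫⁻ x in R, f₀ x ∂μ) :
    ∫⁻ x in S, f₁ x ∂μ ≤ ∫⁻ x in R, f₁ x ∂μ := by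
  have hRm : MeasurableSet R := by
    rw [hR]; exact measurableSet_le (measurable_const.mul hf₀) hf₁
  -- split integrals
  have split : ∀ (f : X → ℝ≥0∞), Measurable f →
      (∫⁻ x in S, f x ∂μ = (∫⁻ x in S ∩ R, f x ∂μ) + ∫⁻ x in S \ R, f x ∂μ) ∧
      (∫⁻ x in R, f x ∂μ = (∫⁻ x in S ∩ R, f x ∂μ) + ∫⁻ x in R \ S, f x ∂μ) := by
    intro f hf
    constructor
    · rw [← lintegral_union (hS.diff hRm)
        (disjoint_sdiff_self_right.mono_left Set.inter_subset_right),
        Set.inter_union_diff]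
    · rw [Set.inter_comm, ← lintegral_union (hRm.diff hS)
        (disjoint_sdiff_self_right.mono_left Set.inter_subset_right),
        Set.inter_union_diff]
  have h0S := (split f₀ hf₀).1
  have h0R := (split f₀ hf₀).2
  have h1S := (split f₁ hf₁).1
  have h1R := (split f₁ hf₁).2
  have hfin : (∫⁻ x in S ∩ R, f₀ x ∂μ) ≠ ⊤ := by
    refine ne_top_of_le_ne_top ?_ (setLIntegral_le_lintegral _ _)
    simp [hf₀1]
  have key : ∫⁻ x in S \ R, f₀ x ∂μ ≤ ∫⁻ x in R \ S, f₀ x ∂μ := by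
    rw [h0S, h0R] at hsize
    exact (ENNReal.add_le_add_iff_left hfin).mp hsize
  have hdiff1 : ∫⁻ x in S \ R, f₁ x ∂μ ≤ lam₀ * ∫⁻ x in S \ R, f₀ x ∂μ := by
    rw [← lintegral_const_mul _ hf₀]
    refine setLIntegral_mono (measurable_const.mul hf₀) ?_
    intro x hx
    have : ¬ ((lam₀ : ℝ≥0∞) * f₀ x ≤ f₁ x) := by
      have := hx.2; rw [hR] at this; exact this
    exact le_of_not_ge this
  have hdiff2 : lam₀ * ∫⁻ x in R \ S, f₀ x ∂μ ≤ ∫⁻ x in R \ S, f₁ x ∂μ := by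
    rw [← lintegral_const_mul _ hf₀]
    refine setLIntegral_mono hf₁ ?_
    intro x hx
    have := hx.1; rw [hR] at this; exact this
  calc ∫⁻ x in S, f₁ x ∂μ
      = (∫⁻ x in S ∩ R, f₁ x ∂μ) + ∫⁻ x in S \ R, f₁ x ∂μ := h1S
    _ ≤ (∫⁻ x in S ∩ R, f₁ x ∂μ) + ∫⁻ x in R \ S, f₁ x ∂μ := by
        gcongr _ + ?_
        calc ∫⁻ x in S \ R, f₁ x ∂μ ≤ lam₀ * ∫⁻ x in S \ R, f₀ x ∂μ := hdiff1
          _ ≤ lam₀ * ∫⁻ x in R \ S, f₀ x ∂μ := by gcongr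
          _ ≤ ∫⁻ x in R \ S, f₁ x ∂μ := hdiff2
    _ = ∫⁻ x in R, f₁ x ∂μ := h1R.symm
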